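/- (Key proposition) Let the reaction system be weakly reversible, deficiency zero, with mass action kinetics, and let x̄ be the unique positive equilibrium in the compatibility class of x(0) ∈ ℝ^m_{>0}. Let V(x) = Σ_i [x_i(ln x_i − ln x̄_i − 1) + x̄_i] be strictly decreasing along the trajectory. If y ∈ ω(x(0)) is an ω-limit point of the trajectory, then there exists a nonzero vector z₀ ∈ S with supp(z₀) ⊆ supp(y). -/

import Mathlib

open Filter

/-- The right-hand side of the chemical reaction network ODE. -/
def netF {m : ℕ} {ι : Type} [Fintype ι] (y yp : ι → Fin m → ℕ)
    (R : ι → (Fin m → ℝ) → ℝ) (x : Fin m → ℝ) : Fin m → ℝ :=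
  ∑ r : ι, R r x • (fun i => (yp r i : ℝ) - (y r i : ℝ))

/-- The right-hand side for mass action kinetics with rate constants `k`. -/
def massF {m : ℕ} {ι : Type} [Fintype ι] (y yp : ι → Fin m → ℕ) (k : ι → ℝ) :
    (Fin m → ℝ) → Fin m → ℝ :=
  netF y yp (fun r x => k r * ∏ i, x i ^ (y r i))

/-- The stoichiometric subspace `S = Span{y' - y}`. -/
def stoichSubspace {m : ℕ} {ι : Type} [Fintype ι] (y yp : ι → Fin m → ℕ) :
    Submodule ℝ (Fin m → ℝ) :=
  Submodule.span ℝ (Set.range fun r => fun i => (yp r i : ℝ) - (y r i : ℝ))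

/-- The set of complexes of the network. -/
def complexes {m : ℕ} {ι : Type} [Fintype ι] (y yp : ι → Fin m → ℕ) :
    Set (Fin m → ℕ) :=
  Set.range y ∪ Set.range yp

/-- The edge relation of the reaction digraph: `a → b` iff some reaction has
reactant complex `a` and product complex `b`. -/
def reactsTo {m : ℕ} {ι : Type} [Fintype ι] (y yp : ι → Fin m → ℕ)
    (a b : Fin m → ℕ) : Prop :=
  ∃ r, y r = a ∧ yp r = b

/-- Weak reversibility: for every reaction there is a directed path from the
product complex back to the reactant complex. -/
def WeaklyReversible {m : ℕ} {ι : Type} [Fintype ι] (y yp : ι → Fin m → ℕ) : Prop :=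
  ∀ r, Relation.ReflTransGen (reactsTo y yp) (yp r) (y r)

/-- The linkage classes: connected components of the reaction graph
(equivalence classes of complexes under the symmetric-transitive closure). -/
def linkageClasses {m : ℕ} {ι : Type} [Fintype ι] (y yp : ι → Fin m → ℕ) :
    Set (Set (Fin m → ℕ)) :=
  {L | ∃ a ∈ complexes y yp, L = {b | Relation.EqvGen (reactsTo y yp) a b}}

/-- Deficiency zero: `n - l - s = 0`, i.e. `n = l + s`. -/
def DeficiencyZero {m : ℕ} {ι : Type} [Fintype ι] (y yp : ι → Fin m → ℕ) : Prop :=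
  (complexes y yp).ncard =
    (linkageClasses y yp).ncard + Module.finrank ℝ (stoichSubspace y yp)

/-- `W` is a semi-locking set: it is nonempty and every reaction whose product
complex contains a species of `W` has a species of `W` in its reactant complex. -/
def Semilocking {m : ℕ} {ι : Type} [Fintype ι] (y yp : ι → Fin m → ℕ)
    (W : Set (Fin m)) : Prop :=
  W.Nonempty ∧ ∀ r, (∃ i ∈ W, yp r i ≠ 0) → ∃ i ∈ W, y r i ≠ 0


private lemma mul_log_conv {u v : ℝ} (hu : 0 < u) (hv : 0 < v) :
    v * Real.log v - u * Real.log u ≤ (Real.log v + 1) * (v - u) := by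
  have h := Real.log_le_sub_one_of_pos (show (0:ℝ) < v / u from div_pos hv hu)
  rw [Real.log_div hv.ne' hu.ne'] at h
  have h2 : u * (Real.log v - Real.log u) ≤ v - u := by
    have h3 := mul_le_mul_of_nonneg_left h hu.le
    calc u * (Real.log v - Real.log u) ≤ u * (v / u - 1) := h3
      _ = v - u := by field_simp
  nlinarith [h2]

private lemma nonZ_bound {u s a ε C : ℝ} (hu : 0 < u) (hvpos : 0 < u + s)
    (hsmall : |s| ≤ u / 2) (hsC : |s| ≤ C * ε) :
    ((u + s) * Real.log (u + s) - u * Real.log u) - s * a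
      ≤ C * ε * (1 + |Real.log (u / 2)| + |Real.log (2 * u)| + |a|) := by
  obtain ⟨hs1, hs2⟩ := abs_le.mp hsmall
  have hv1 : u / 2 ≤ u + s := by linarith
  have hv2 : u + s ≤ 2 * u := by linarith
  have hu2 : (0:ℝ) < u / 2 := by linarith
  have hlogv : |Real.log (u + s)| ≤ |Real.log (u / 2)| + |Real.log (2 * u)| := by
    refine abs_le.mpr ⟨?_, ?_⟩
    · have := Real.log_le_log hu2 hv1
      have h4 : -|Real.log (u / 2)| ≤ Real.log (u / 2) := neg_abs_le _
      have h5 : (0:ℝ) ≤ |Real.log (2 * u)| := abs_nonneg _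
      linarith
    · have := Real.log_le_log hvpos hv2
      have h4 : Real.log (2 * u) ≤ |Real.log (2 * u)| := le_abs_self _
      have h5 : (0:ℝ) ≤ |Real.log (u / 2)| := abs_nonneg _
      linarith
  have h1 := mul_log_conv hu hvpos
  have hCε : (0:ℝ) ≤ C * ε := le_trans (abs_nonneg s) hsC
  calc ((u + s) * Real.log (u + s) - u * Real.log u) - s * a
      ≤ (Real.log (u + s) + 1) * (u + s - u) - s * a := by linarith
    _ = (Real.log (u + s) + 1 - a) * s := by ring
    _ ≤ |(Real.log (u + s) + 1 - a) * s| := le_abs_self _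
    _ = |Real.log (u + s) + 1 - a| * |s| := abs_mul _ _
    _ ≤ (1 + |Real.log (u / 2)| + |Real.log (2 * u)| + |a|) * (C * ε) := by
        refine mul_le_mul ?_ hsC (abs_nonneg _) (by positivity)
        calc |Real.log (u + s) + 1 - a| ≤ |Real.log (u + s)| + 1 + |a| := by
              have := abs_add_le (Real.log (u + s) + 1) (-a)
              have h6 := abs_add_le (Real.log (u + s)) (1:ℝ)
              simp only [abs_neg] at this
              have h7 : |(1:ℝ)| = 1 := abs_one
              calc |Real.log (u + s) + 1 - a| = |(Real.log (u + s) + 1) + (-a)| := by ring_nf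
                _ ≤ |Real.log (u + s) + 1| + |a| := by simpa using this
                _ ≤ |Real.log (u + s)| + 1 + |a| := by
                    have := abs_add_le (Real.log (u + s)) (1:ℝ)
                    simp only [abs_one] at this
                    linarith
          _ ≤ 1 + |Real.log (u / 2)| + |Real.log (2 * u)| + |a| := by linarith
    _ = C * ε * (1 + |Real.log (u / 2)| + |Real.log (2 * u)| + |a|) := by ring

private lemma Vbar_estimate {m : ℕ} (p xbar s : Fin m → ℝ) (ε C : ℝ)
    (hxbar : ∀ i, 0 < xbar i)
    (hp : ∀ i, 0 ≤ p i)
    (hv : ∀ i, 0 < p i + s i)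
    (hZpos : ∀ i, p i = 0 → 0 < s i)
    (hZle : ∀ i, p i = 0 → s i ≤ ε)
    (hσ : ε ≤ ∑ i ∈ Finset.univ.filter (fun i => p i = 0), s i)
    (hsC : ∀ i, |s i| ≤ C * ε)
    (hsmall : ∀ i, p i ≠ 0 → |s i| ≤ p i / 2)
    (hε0 : 0 < ε) (hε1 : ε ≤ 1) :
    (∑ i, ((p i + s i) * (Real.log (p i + s i) - Real.log (xbar i) - 1) + xbar i))
      - (∑ i, (p i * (Real.log (p i) - Real.log (xbar i) - 1) + xbar i))
      ≤ ε * (Real.log ε + ((∑ i, |Real.log (xbar i) + 1|)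
          + C * ∑ i, (1 + |Real.log (p i / 2)| + |Real.log (2 * p i)|
              + |Real.log (xbar i) + 1|))) := by
  classical
  rw [← Finset.sum_sub_distrib]
  set d : Fin m → ℝ := fun i =>
    ((p i + s i) * (Real.log (p i + s i) - Real.log (xbar i) - 1) + xbar i)
      - (p i * (Real.log (p i) - Real.log (xbar i) - 1) + xbar i) with hd
  have hsplit := Finset.sum_filter_add_sum_filter_not Finset.univ (fun i => p i = 0) d
  have hZsum : ∑ i ∈ Finset.univ.filter (fun i => p i = 0), d i
      ≤ ε * Real.log ε + ε * ∑ i, |Real.log (xbar i) + 1| := by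
    have hterm : ∀ i ∈ Finset.univ.filter (fun i => p i = 0),
        d i ≤ s i * Real.log ε + ε * |Real.log (xbar i) + 1| := by
      intro i hi
      have hpi : p i = 0 := by simpa using (Finset.mem_filter.mp hi).2
      have hsi : 0 < s i := hZpos i hpi
      have hsiε : s i ≤ ε := hZle i hpi
      have hdi : d i = s i * Real.log (s i) - s i * (Real.log (xbar i) + 1) := by
        simp only [hd, hpi, zero_add, zero_mul]
        ring
      have h1 : s i * Real.log (s i) ≤ s i * Real.log ε :=
        mul_le_mul_of_nonneg_left (Real.log_le_log hsi hsiε) hsi.le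
      have h2 : - (s i * (Real.log (xbar i) + 1)) ≤ ε * |Real.log (xbar i) + 1| := by
        have := neg_abs_le (Real.log (xbar i) + 1)
        have h3 : - (s i * (Real.log (xbar i) + 1)) ≤ s i * |Real.log (xbar i) + 1| := by
          have h3' := mul_le_mul_of_nonneg_left (neg_le_abs (Real.log (xbar i) + 1)) hsi.le
          nlinarith [h3']
        have h4 : s i * |Real.log (xbar i) + 1| ≤ ε * |Real.log (xbar i) + 1| :=
          mul_le_mul_of_nonneg_right hsiε (abs_nonneg _)
        linarith
      linarith [hdi ▸ le_refl (d i)]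
    calc ∑ i ∈ Finset.univ.filter (fun i => p i = 0), d i
        ≤ ∑ i ∈ Finset.univ.filter (fun i => p i = 0),
            (s i * Real.log ε + ε * |Real.log (xbar i) + 1|) := Finset.sum_le_sum hterm
      _ = (∑ i ∈ Finset.univ.filter (fun i => p i = 0), s i) * Real.log ε
            + ∑ i ∈ Finset.univ.filter (fun i => p i = 0), ε * |Real.log (xbar i) + 1| := by
          rw [Finset.sum_add_distrib, Finset.sum_mul]
      _ ≤ ε * Real.log ε + ε * ∑ i, |Real.log (xbar i) + 1| := by
          have hlogε : Real.log ε ≤ 0 := Real.log_nonpos hε0.le hε1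
          have h5 : (∑ i ∈ Finset.univ.filter (fun i => p i = 0), s i) * Real.log ε
              ≤ ε * Real.log ε := mul_le_mul_of_nonpos_right hσ hlogε
          have h6 : ∑ i ∈ Finset.univ.filter (fun i => p i = 0), ε * |Real.log (xbar i) + 1|
              ≤ ∑ i, ε * |Real.log (xbar i) + 1| := by
            refine Finset.sum_le_sum_of_subset_of_nonneg (Finset.filter_subset _ _) ?_
            intro i _ _
            positivity
          have h6' : ∑ i ∈ Finset.univ.filter (fun i => p i = 0), ε * |Real.log (xbar i) + 1|
              ≤ ε * ∑ i, |Real.log (xbar i) + 1| := by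
            rw [Finset.mul_sum]; exact h6
          linarith
  have hNsum : ∑ i ∈ Finset.univ.filter (fun i => ¬ p i = 0), d i
      ≤ ε * (C * ∑ i, (1 + |Real.log (p i / 2)| + |Real.log (2 * p i)|
          + |Real.log (xbar i) + 1|)) := by
    have hterm : ∀ i ∈ Finset.univ.filter (fun i => ¬ p i = 0),
        d i ≤ C * ε * (1 + |Real.log (p i / 2)| + |Real.log (2 * p i)|
          + |Real.log (xbar i) + 1|) := by
      intro i hi
      have hpi : p i ≠ 0 := by simpa using (Finset.mem_filter.mp hi).2
      have hui : 0 < p i := lt_of_le_of_ne (hp i) (Ne.symm hpi)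
      have hdi : d i = ((p i + s i) * Real.log (p i + s i) - p i * Real.log (p i))
          - s i * (Real.log (xbar i) + 1) := by
        simp only [hd]; ring
      rw [hdi]
      exact nonZ_bound hui (hv i) (hsmall i hpi) (hsC i)
    calc ∑ i ∈ Finset.univ.filter (fun i => ¬ p i = 0), d i
        ≤ ∑ i ∈ Finset.univ.filter (fun i => ¬ p i = 0),
            C * ε * (1 + |Real.log (p i / 2)| + |Real.log (2 * p i)|
              + |Real.log (xbar i) + 1|) := Finset.sum_le_sum hterm
      _ ≤ ∑ i, C * ε * (1 + |Real.log (p i / 2)| + |Real.log (2 * p i)|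
              + |Real.log (xbar i) + 1|) := by
          refine Finset.sum_le_sum_of_subset_of_nonneg (Finset.filter_subset _ _) ?_
          intro i _ _
          have hCε : (0:ℝ) ≤ C * ε := le_trans (abs_nonneg (s i)) (hsC i)
          positivity
      _ = ε * (C * ∑ i, (1 + |Real.log (p i / 2)| + |Real.log (2 * p i)|
              + |Real.log (xbar i) + 1|)) := by
          rw [← Finset.mul_sum]; ring
  have := hsplit
  nlinarith [hZsum, hNsum]

/-- Key proposition: for a weakly reversible, deficiency zero mass action system,
if `V` is strictly decreasing along a trajectory and `p` is an ω-limit point of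
the trajectory, then there is a nonzero `z₀` in the stoichiometric subspace with
`supp z₀ ⊆ supp p`. -/
theorem omega_limit_support_vector
    {m : ℕ} {ι : Type} [Fintype ι]
    (y yp : ι → Fin m → ℕ) (k : ι → ℝ) (hk : ∀ r, 0 < k r)
    (hwr : WeaklyReversible y yp) (hdef : DeficiencyZero y yp)
    (x : ℝ → Fin m → ℝ)
    (hxpos : ∀ t : ℝ, 0 ≤ t → ∀ i, 0 < x t i)
    (hODE : ∀ t : ℝ, 0 ≤ t → HasDerivAt x (massF y yp k (x t)) t)
    (xbar : Fin m → ℝ) (hxbarpos : ∀ i, 0 < xbar i)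
    (hxbarclass : xbar - x 0 ∈ stoichSubspace y yp)
    (hxbareq : massF y yp k xbar = 0)
    (hVdec : StrictAntiOn
      (fun t => ∑ i, (x t i * (Real.log (x t i) - Real.log (xbar i) - 1) + xbar i))
      (Set.Ici (0 : ℝ)))
    (p : Fin m → ℝ)
    (hω : ∃ tn : ℕ → ℝ, Tendsto tn atTop atTop ∧
      Tendsto (fun n => x (tn n)) atTop (nhds p)) :
    ∃ z₀ ∈ stoichSubspace y yp, z₀ ≠ 0 ∧ ∀ i, p i = 0 → z₀ i = 0 := by
  classical
  obtain ⟨tn, htn, hlim⟩ := hω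
  by_contra hcon
  push_neg at hcon
  have hS0 : ∀ z ∈ stoichSubspace y yp, (∀ i, p i = 0 → z i = 0) → z = 0 := by
    intro z hz hzZ
    by_contra hzne
    obtain ⟨i, hi, hzi⟩ := hcon z hz hzne
    exact hzi (hzZ i hi)
  -- the vector field lands in S
  have hFS : ∀ w, massF y yp k w ∈ stoichSubspace y yp := by
    intro w
    refine Submodule.sum_mem _ fun r _ => Submodule.smul_mem _ _ ?_
    exact Submodule.subset_span ⟨r, rfl⟩
  -- projection with kernel S
  obtain ⟨q, hq⟩ := Submodule.exists_isCompl (stoichSubspace y yp)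
  set π : (Fin m → ℝ) →ₗ[ℝ] q := Submodule.linearProjOfIsCompl q (stoichSubspace y yp) hq.symm
    with hπdef
  have hπker : ∀ w, π w = 0 ↔ w ∈ stoichSubspace y yp := fun w =>
    Submodule.linearProjOfIsCompl_apply_eq_zero_iff hq.symm
  -- π ∘ x is constant on [0,∞)
  have hder : ∀ t : ℝ, 0 ≤ t → HasDerivAt (fun t => π (x t)) 0 t := by
    intro t ht
    have h1 := (LinearMap.toContinuousLinearMap π).hasFDerivAt.comp_hasDerivAt t (hODE t ht)
    have h2 : (LinearMap.toContinuousLinearMap π) (massF y yp k (x t)) = 0 := by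
      simpa using (hπker _).2 (hFS (x t))
    rw [h2] at h1
    exact h1
  have hπconst : ∀ t : ℝ, 0 ≤ t → π (x t) = π (x 0) := by
    intro b hb
    have hcont : ContinuousOn (fun t => π (x t)) (Set.Icc 0 b) :=
      fun t ht => ((hder t ht.1).continuousAt).continuousWithinAt
    exact constant_of_has_deriv_right_zero hcont
      (fun t ht => (hder t ht.1).hasDerivWithinAt) b (Set.mem_Icc.mpr ⟨hb, le_rfl⟩)
  have hxS : ∀ t : ℝ, 0 ≤ t → x t - x 0 ∈ stoichSubspace y yp := fun t ht =>
    (hπker _).1 (by rw [map_sub, hπconst t ht, sub_self])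
  have htn0 : ∀ᶠ n in atTop, (0:ℝ) ≤ tn n := htn.eventually_ge_atTop 0
  have hpS : p - x 0 ∈ stoichSubspace y yp := by
    have hclosed : IsClosed ((stoichSubspace y yp : Set (Fin m → ℝ))) :=
      Submodule.closed_of_finiteDimensional _
    refine hclosed.mem_of_tendsto (hlim.sub tendsto_const_nhds) ?_
    filter_upwards [htn0] with n hn
    exact hxS (tn n) hn
  set s : ℕ → Fin m → ℝ := fun n => x (tn n) - p with hsdef
  have hsS : ∀ n, 0 ≤ tn n → s n ∈ stoichSubspace y yp := by
    intro n hn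
    have := Submodule.sub_mem _ (hxS (tn n) hn) hpS
    have heq : x (tn n) - x 0 - (p - x 0) = s n := by
      rw [hsdef]; abel
    rwa [heq] at this
  have hs0 : Tendsto s atTop (nhds 0) := by
    have := hlim.sub (tendsto_const_nhds (x := p) (f := atTop))
    simpa [hsdef] using this
  -- the Lyapunov function
  set V : (Fin m → ℝ) → ℝ :=
    fun w => ∑ i, (w i * (Real.log (w i) - Real.log (xbar i) - 1) + xbar i) with hVdef
  have hVcont : Continuous V := by
    rw [hVdef]
    refine continuous_finset_sum _ fun i _ => ?_
    have h1 : Continuous fun w : Fin m → ℝ => w i * Real.log (w i) :=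
      Real.continuous_mul_log.comp (continuous_apply i)
    have h2 : (fun w : Fin m → ℝ => w i * (Real.log (w i) - Real.log (xbar i) - 1) + xbar i)
        = fun w : Fin m → ℝ => w i * Real.log (w i)
            - (Real.log (xbar i) + 1) * w i + xbar i := by
      funext w; ring
    rw [h2]
    exact ((h1.sub (continuous_const.mul (continuous_apply i))).add continuous_const)
  have hVdec' : StrictAntiOn (fun t => V (x t)) (Set.Ici 0) := by
    rw [hVdef]; exact hVdec
  have hVlim : Tendsto (fun n => V (x (tn n))) atTop (nhds (V p)) :=
    (hVcont.tendsto p).comp hlim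
  have hgt : ∀ t : ℝ, 0 ≤ t → V p < V (x t) := by
    intro t ht
    have hge : V p ≤ V (x (t + 1)) := by
      refine le_of_tendsto hVlim ?_
      filter_upwards [htn.eventually_ge_atTop (t + 2), htn0] with n hn hn0
      exact (hVdec' (show t + 1 ∈ Set.Ici (0:ℝ) by simp; linarith)
        (show tn n ∈ Set.Ici (0:ℝ) by simpa using hn0) (by linarith)).le
    have hlt := hVdec' (show t ∈ Set.Ici (0:ℝ) by simpa using ht)
      (show t + 1 ∈ Set.Ici (0:ℝ) by simp; linarith) (by linarith)
    simp only at hlt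
    linarith
  -- p is nonnegative
  have hppos : ∀ i, 0 ≤ p i := by
    intro i
    have hlim_i : Tendsto (fun n => x (tn n) i) atTop (nhds (p i)) :=
      ((continuous_apply i).tendsto p).comp hlim
    refine ge_of_tendsto hlim_i ?_
    filter_upwards [htn0] with n hn
    exact (hxpos (tn n) hn i).le
  -- the truncation map
  set T : (Fin m → ℝ) →ₗ[ℝ] (Fin m → ℝ) :=
    { toFun := fun w i => if p i = 0 then w i else 0
      map_add' := by intro a b; funext i; by_cases h : p i = 0 <;> simp [h]
      map_smul' := by intro c w; funext i; by_cases h : p i = 0 <;> simp [h] } with hTdef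
  have hT : ∀ w i, T w i = if p i = 0 then w i else 0 := fun _ _ => rfl
  set T' : stoichSubspace y yp →ₗ[ℝ] (Fin m → ℝ) := T ∘ₗ (stoichSubspace y yp).subtype
    with hT'def
  have hinj : LinearMap.ker T' = ⊥ := by
    rw [LinearMap.ker_eq_bot']
    intro z hz
    have hzc : (z : Fin m → ℝ) = 0 := by
      refine hS0 z z.2 fun i hi => ?_
      have := congrFun (show T (z : Fin m → ℝ) = 0 from hz) i
      simpa [hT, hi] using this
    exact Subtype.ext hzc
  obtain ⟨K, hKpos, hK⟩ := T'.exists_antilipschitzWith hinj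
  have hnormK : ∀ n, 0 ≤ tn n → ‖s n‖ ≤ (K : ℝ) * ‖T (s n)‖ := by
    intro n hn
    have h1 := hK.le_mul_dist (⟨s n, hsS n hn⟩ : stoichSubspace y yp) 0
    simpa [dist_eq_norm, hT'def] using h1
  -- constants
  set A : ℝ := ∑ i, |Real.log (xbar i) + 1| with hA
  set Kc : ℝ := ∑ i, (1 + |Real.log (p i / 2)| + |Real.log (2 * p i)|
      + |Real.log (xbar i) + 1|) with hKc
  set D : ℝ := A + (K : ℝ) * Kc with hD
  -- eventual smallness
  have hTs0 : Tendsto (fun n => ‖T (s n)‖) atTop (nhds 0) := by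
    have h1 : Tendsto (fun n => T (s n)) atTop (nhds 0) := by
      have := (T.continuous_of_finiteDimensional.tendsto 0).comp hs0
      simpa [Function.comp_def] using this
    simpa using h1.norm
  have hev1 : ∀ᶠ n in atTop, ∀ i, p i ≠ 0 → |s n i| ≤ p i / 2 := by
    rw [eventually_all]
    intro i
    by_cases hpi : p i = 0
    · exact Eventually.of_forall fun n h => absurd hpi h
    · have hlim_i : Tendsto (fun n => s n i) atTop (nhds 0) := by
        have := ((continuous_apply i).tendsto 0).comp hs0
        exact this
      have hpi2 : 0 < p i / 2 := by
        have := lt_of_le_of_ne (hppos i) (Ne.symm hpi); linarith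
      have := hlim_i.abs
      rw [abs_zero] at this
      filter_upwards [this.eventually_lt_const hpi2] with n hn _
      exact hn.le
  have hev2 : ∀ᶠ n in atTop, ‖T (s n)‖ ≤ 1 :=
    (hTs0.eventually_lt_const one_pos).mono fun n hn => hn.le
  have hev3 : ∀ᶠ n in atTop, ‖T (s n)‖ < Real.exp (-D) :=
    hTs0.eventually_lt_const (Real.exp_pos _)
  obtain ⟨n, hn0, hn1, hn2, hn3⟩ := (htn0.and (hev1.and (hev2.and hev3))).exists
  -- set up for the estimate
  set ε : ℝ := ‖T (s n)‖ with hε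
  have hxeq : x (tn n) = fun i => p i + s n i := by
    funext i; simp [hsdef]
  rcases eq_or_lt_of_le (norm_nonneg (T (s n))) with hε0 | hε0
  · -- ε = 0 : then s n = 0 and x (tn n) = p, contradicting strict decrease
    have hTz : T (s n) = 0 := by rwa [eq_comm, norm_eq_zero] at hε0
    have hsz : s n = 0 := by
      refine hS0 (s n) (hsS n hn0) fun i hi => ?_
      have := congrFun hTz i
      simpa [hT, hi] using this
    have hxp : x (tn n) = p := sub_eq_zero.mp hsz
    have hlt := hgt (tn n) hn0
    rw [hxp] at hlt
    exact lt_irrefl _ hlt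
  · -- ε > 0
    have hε0' : 0 < ε := by rw [hε]; exact hε0
    have hZpos : ∀ i, p i = 0 → 0 < s n i := by
      intro i hi
      have h1 := hxpos (tn n) hn0 i
      rw [hxeq] at h1
      simpa [hi] using h1
    have hZle : ∀ i, p i = 0 → s n i ≤ ε := by
      intro i hi
      have h1 : ‖T (s n) i‖ ≤ ‖T (s n)‖ := norm_le_pi_norm _ i
      rw [Real.norm_eq_abs, hT, if_pos hi] at h1
      exact (le_abs_self _).trans (h1.trans (le_of_eq hε.symm))
    have hσnonneg : (0:ℝ) ≤ ∑ i ∈ Finset.univ.filter (fun i => p i = 0), s n i :=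
      Finset.sum_nonneg fun i hi =>
        (hZpos i (by simpa using (Finset.mem_filter.mp hi).2)).le
    have hσ : ε ≤ ∑ i ∈ Finset.univ.filter (fun i => p i = 0), s n i := by
      rw [hε]
      refine (pi_norm_le_iff_of_nonneg hσnonneg).mpr ?_
      intro i
      rw [Real.norm_eq_abs, hT]
      by_cases hi : p i = 0
      · rw [if_pos hi, abs_of_pos (hZpos i hi)]
        exact Finset.single_le_sum
          (fun j hj => (hZpos j (by simpa using (Finset.mem_filter.mp hj).2)).le)
          (by simp [hi])
      · rw [if_neg hi]
        simpa using hσnonneg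
    have hsC : ∀ i, |s n i| ≤ (K:ℝ) * ε := by
      intro i
      have h1 : ‖s n i‖ ≤ ‖s n‖ := norm_le_pi_norm _ i
      rw [Real.norm_eq_abs] at h1
      exact h1.trans ((hnormK n hn0).trans (le_of_eq (by rw [hε])))
    have hv : ∀ i, 0 < p i + s n i := by
      intro i
      have h1 := hxpos (tn n) hn0 i
      rwa [hxeq] at h1
    have hest := Vbar_estimate p xbar (s n) ε (K:ℝ) hxbarpos hppos hv hZpos hZle hσ hsC
      hn1 hε0' hn2
    have hVx : V (x (tn n))
        = ∑ i, ((p i + s n i) * (Real.log (p i + s n i) - Real.log (xbar i) - 1) + xbar i) := by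
      rw [hxeq, hVdef]
    have hVp : V p = ∑ i, (p i * (Real.log (p i) - Real.log (xbar i) - 1) + xbar i) := by
      rw [hVdef]
    have hlog : Real.log ε
        + ((∑ i, |Real.log (xbar i) + 1|)
          + (K:ℝ) * ∑ i, (1 + |Real.log (p i / 2)| + |Real.log (2 * p i)|
              + |Real.log (xbar i) + 1|)) < 0 := by
      have h2 := Real.log_lt_log hε0' hn3
      rw [Real.log_exp, hD, hA, hKc] at h2
      linarith
    have hneg : ε * (Real.log ε
        + ((∑ i, |Real.log (xbar i) + 1|)
          + (K:ℝ) * ∑ i, (1 + |Real.log (p i / 2)| + |Real.log (2 * p i)|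
              + |Real.log (xbar i) + 1|))) < 0 := mul_neg_of_pos_of_neg hε0' hlog
    have hgt' := hgt (tn n) hn0
    rw [hVx, hVp] at hgt'
    linarith [hest, hneg, hgt']
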